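/- Let n ≥ 1, let C_n = ⟨t⟩ be the cyclic group of order n, and work in ℚ[C_n]. Set σ = n⁻¹ Σ_{j=0}^{n−1} t^j and x = (2n)⁻¹ Σ_{j=0}^{n−1} (2j + 1 − n) t^j. Then x · (t − 1) = 1 − σ, and σ is idempotent with σ(t−1) = 0; in particular x is the reduced inverse of t − 1: in every field summand of ℚ[C_n] on which t − 1 projects to a nonzero element, x projects to its inverse, and x projects to 0 on the augmentation summand. -/

import Mathlib

/-- The reduced inverse of `t - 1` for `t` of order `n`: with
`σ = n⁻¹ ∑_{j<n} t^j` and `x = (2n)⁻¹ ∑_{j<n} (2j+1-n) t^j` in `ℚ[C_n]`, one has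
`x (t - 1) = 1 - σ`, `σ` is idempotent, and `σ (t - 1) = 0`. -/
theorem reduced_inverse_of_cyclic (n : ℕ) (hn : 1 ≤ n) :
    letI of := MonoidAlgebra.of ℚ (Multiplicative (ZMod n))
    letI t : Multiplicative (ZMod n) := Multiplicative.ofAdd 1
    letI σ : MonoidAlgebra ℚ (Multiplicative (ZMod n)) :=
      (n : ℚ)⁻¹ • ∑ j ∈ Finset.range n, of (t ^ j)
    letI x : MonoidAlgebra ℚ (Multiplicative (ZMod n)) :=
      (2 * n : ℚ)⁻¹ • ∑ j ∈ Finset.range n, (2 * (j : ℚ) + 1 - n) • of (t ^ j)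
    x * (of t - 1) = 1 - σ ∧ σ * σ = σ ∧ σ * (of t - 1) = 0 := by

  set of := MonoidAlgebra.of ℚ (Multiplicative (ZMod n)) with hof
  set t := Multiplicative.ofAdd (1 : ZMod n) with ht
  have hn0 : (n : ℚ) ≠ 0 := Nat.cast_ne_zero.mpr (by omega)
  have htn : t ^ n = 1 := by
    rw [ht, ← ofAdd_nsmul]
    simp [nsmul_eq_mul, ZMod.natCast_self]
  set S : MonoidAlgebra ℚ (Multiplicative (ZMod n)) :=
    ∑ j ∈ Finset.range n, of (t ^ j) with hS
  -- shift lemma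
  have hshift : ∑ j ∈ Finset.range n, of (t ^ (j + 1)) = S := by
    have h1 := Finset.sum_range_succ' (fun j => of (t ^ j)) n
    have h2 := Finset.sum_range_succ (fun j => of (t ^ j)) n
    simp only [pow_zero, map_one, htn] at h1 h2
    rw [h2, ← hS] at h1
    have := h1.symm
    -- S + 1 = (∑ j<n, of (t^(j+1))) + 1
    exact add_right_cancel this
  have hSt : S * of t = S := by
    rw [hS, Finset.sum_mul]
    calc ∑ j ∈ Finset.range n, of (t ^ j) * of t
        = ∑ j ∈ Finset.range n, of (t ^ (j + 1)) := by
          refine Finset.sum_congr rfl fun j _ => ?_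
          rw [← map_mul, pow_succ]
      _ = S := hshift
  have hStk : ∀ k : ℕ, S * of (t ^ k) = S := by
    intro k
    induction k with
    | zero => simp
    | succ k ih => rw [pow_succ, map_mul, ← mul_assoc, ih, hSt]
  have hSS : S * S = (n : ℚ) • S := by
    rw [hS, Finset.mul_sum]
    calc ∑ j ∈ Finset.range n, S * of (t ^ j)
        = ∑ _j ∈ Finset.range n, S := Finset.sum_congr rfl fun j _ => hStk j
      _ = (n : ℚ) • S := by
          rw [Finset.sum_const, Finset.card_range, ← Nat.cast_smul_eq_nsmul ℚ]
  refine ⟨?_, ?_, ?_⟩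
  · -- x * (of t - 1) = 1 - σ
    have key : (∑ j ∈ Finset.range n, (2 * (j : ℚ) + 1 - n) • of (t ^ j)) * (of t - 1)
        = (2 * n : ℚ) • 1 - (2 : ℚ) • S := by
      rw [Finset.sum_mul]
      have step : ∀ j ∈ Finset.range n,
          ((2 * (j : ℚ) + 1 - n) • of (t ^ j)) * (of t - 1)
          = ((2 * ((j+1 : ℕ) : ℚ) + 1 - n) • of (t ^ (j+1))
              - (2 * (j : ℚ) + 1 - n) • of (t ^ j)) - (2 : ℚ) • of (t ^ (j+1)) := by
        intro j _
        have hm : of (t ^ j) * of t = of (t ^ (j + 1)) := by rw [← map_mul, pow_succ]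
        rw [mul_sub, mul_one, smul_mul_assoc, hm]
        push_cast
        module
      rw [Finset.sum_congr rfl step, Finset.sum_sub_distrib,
        Finset.sum_range_sub (fun j => (2 * (j : ℚ) + 1 - n) • of (t ^ j)),
        ← Finset.smul_sum, hshift, htn]
      simp only [pow_zero, map_one]
      push_cast
      module
    show ((2 * (n:ℚ))⁻¹ • ∑ j ∈ Finset.range n, (2 * (j : ℚ) + 1 - n) • of (t ^ j))
        * (of t - 1) = 1 - (n : ℚ)⁻¹ • S
    rw [smul_mul_assoc, key, smul_sub, smul_smul, smul_smul]
    have h2n : (2 * (n:ℚ))⁻¹ * (2 * n) = 1 := by field_simp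
    have h2n' : (2 * (n:ℚ))⁻¹ * 2 = (n : ℚ)⁻¹ := by field_simp
    rw [h2n, h2n', one_smul]
  · -- σ idempotent
    show ((n : ℚ)⁻¹ • S) * ((n : ℚ)⁻¹ • S) = (n : ℚ)⁻¹ • S
    rw [smul_mul_assoc, mul_smul_comm, hSS, smul_smul, smul_smul]
    congr 1
    field_simp
  · show ((n : ℚ)⁻¹ • S) * (of t - 1) = 0
    rw [smul_mul_assoc, mul_sub, mul_one, hSt, sub_self, smul_zero]
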